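/- Let c₂, c₃ > 0, κ, ρ > 0, γ ≥ 0 and L ≥ 0, and suppose that -c₂ x^{κ+1} + γ c₃² x^{2ρ} ≤ L for all x > 0. Then for all h > 0, α > 0 and x > 0, the tamed coefficients satisfy x·f_h(x) + γ·g_h(x)² ≤ L. -/

import Mathlib

/-- The taming procedure inherits the monotone coupling condition: if
`-c₂ x^{κ+1} + γ c₃² x^{2ρ} ≤ L` for all `x > 0`, then for all `h, α > 0` and `x > 0`
the tamed coefficients `f_h(x) = -c₂ x^κ/(1 + h^α x^{2κα})` and
`g_h(x) = c₃ x^ρ/(1 + h^α x^{2κα})` satisfy `x·f_h(x) + γ·g_h(x)² ≤ L`. -/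
theorem stmt6 (c₂ c₃ κ ρ γ L : ℝ) (hc₂ : 0 < c₂) (hc₃ : 0 < c₃) (hκ : 0 < κ)
    (hρ : 0 < ρ) (hγ : 0 ≤ γ) (hL : 0 ≤ L)
    (hbound : ∀ x : ℝ, 0 < x → -c₂ * x ^ (κ + 1) + γ * c₃ ^ 2 * x ^ (2 * ρ) ≤ L) :
    ∀ h : ℝ, 0 < h → ∀ α : ℝ, 0 < α → ∀ x : ℝ, 0 < x →
      x * ((-c₂ * x ^ κ) / (1 + h ^ α * x ^ (2 * κ * α)))
        + γ * ((c₃ * x ^ ρ) / (1 + h ^ α * x ^ (2 * κ * α))) ^ 2 ≤ L := by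
  intro h hh α hα x hx
  set D : ℝ := 1 + h ^ α * x ^ (2 * κ * α) with hDdef
  have hD1 : (1 : ℝ) ≤ D :=
    le_add_of_nonneg_right (mul_nonneg (Real.rpow_nonneg hh.le _) (Real.rpow_nonneg hx.le _))
  have hD0 : (0 : ℝ) < D := lt_of_lt_of_le one_pos hD1
  clear_value D
  have hx1 : x * ((-c₂ * x ^ κ) / D) = (-c₂ * x ^ (κ + 1)) / D := by
    rw [Real.rpow_add hx, Real.rpow_one]; ring
  have hx2 : γ * ((c₃ * x ^ ρ) / D) ^ 2 = γ * c₃ ^ 2 * x ^ (2 * ρ) / D ^ 2 := by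
    rw [show (2 : ℝ) * ρ = ρ + ρ by ring, Real.rpow_add hx]; ring
  rw [hx1, hx2]
  have hA : -c₂ * x ^ (κ + 1) + γ * c₃ ^ 2 * x ^ (2 * ρ) ≤ L := hbound x hx
  have hnn : 0 ≤ γ * c₃ ^ 2 * x ^ (2 * ρ) :=
    mul_nonneg (mul_nonneg hγ (sq_nonneg _)) (Real.rpow_nonneg hx.le _)
  have h2 : γ * c₃ ^ 2 * x ^ (2 * ρ) / D ^ 2 ≤ γ * c₃ ^ 2 * x ^ (2 * ρ) / D := by
    apply div_le_div_of_nonneg_left hnn hD0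
    nlinarith
  have key : -c₂ * x ^ (κ + 1) / D + γ * c₃ ^ 2 * x ^ (2 * ρ) / D ≤ L := by
    rw [← add_div, div_le_iff₀ hD0]
    nlinarith [hnn, Real.rpow_nonneg hx.le (κ + 1)]
  linarith
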